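/- Let F : Z ⥤ L be a groupoid fibration and U : L ⥤ S a fibered category, and suppose condition (B2) holds. Let Z^m denote the full subcategory of Z on the minimal objects. Then the restriction of the composite functor U ∘ F to Z^m is a groupoid fibration over S: it is a fibered category and every morphism of Z^m is cartesian relative to this restricted functor. -/

import Mathlib

open CategoryTheory

/-- A morphism is an identity morphism (up to the equality of its endpoints). -/
def IsIdentityHom {C : Type*} [Category C] {X Y : C} (f : X ⟶ Y) : Prop :=
  ∃ h : X = Y, f = eqToHom h

/-- A morphism `f : c' ⟶ c` is cartesian relative to `T : C ⥤ D` if every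
`g : c'' ⟶ c` and `u : T c'' ⟶ T c'` with `u ≫ T f = T g` lift uniquely. -/
def IsCartesianHom {C : Type*} [Category C] {D : Type*} [Category D]
    (T : C ⥤ D) {c' c : C} (f : c' ⟶ c) : Prop :=
  ∀ {c'' : C} (g : c'' ⟶ c) (u : T.obj c'' ⟶ T.obj c'),
    u ≫ T.map f = T.map g → ∃! h : c'' ⟶ c', T.map h = u ∧ h ≫ f = g

/-- `T : C ⥤ D` is a fibered category if every morphism `φ : d ⟶ T c` has a cartesian
lift with codomain `c` lying over it. -/
def IsFiberedCat {C : Type*} [Category C] {D : Type*} [Category D] (T : C ⥤ D) : Prop :=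
  ∀ (c : C) (d : D) (φ : d ⟶ T.obj c),
    ∃ (c' : C) (f : c' ⟶ c) (e : T.obj c' = d),
      IsCartesianHom T f ∧ T.map f = eqToHom e ≫ φ

/-- `T` is a groupoid fibration if it is a fibered category and every morphism is
cartesian relative to `T`. -/
def IsGroupoidFibration {C : Type*} [Category C] {D : Type*} [Category D]
    (T : C ⥤ D) : Prop :=
  IsFiberedCat T ∧ ∀ {c' c : C} (f : c' ⟶ c), IsCartesianHom T f

/-- An object `z` is minimal relative to `U ∘ F` if every pair of morphisms
`i : w' ⟶ w`, `j : w' ⟶ z` with `U (F i)`, `U (F j)` identities admits a unique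
completion `k : w ⟶ z` with `i ≫ k = j`. -/
def IsMinimal {Z : Type*} [Category Z] {S : Type*} [Category S]
    (G : Z ⥤ S) (z : Z) : Prop :=
  ∀ {w' w : Z} (i : w' ⟶ w) (j : w' ⟶ z),
    IsIdentityHom (G.map i) → IsIdentityHom (G.map j) →
      ∃! k : w ⟶ z, i ≫ k = j

/-- Condition (B2): for `i : w ⟶ z` with `z` minimal, `F i` is cartesian relative
to `U` iff `w` is minimal. -/
def CondB2 {Z : Type*} [Category Z] {L : Type*} [Category L] {S : Type*} [Category S]
    (F : Z ⥤ L) (U : L ⥤ S) : Prop :=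
  ∀ {w z : Z} (i : w ⟶ z), IsMinimal (F ⋙ U) z →
    (IsCartesianHom U (F.map i) ↔ IsMinimal (F ⋙ U) w)


lemma comp_cartesian {Z : Type*} [Category Z] {L : Type*} [Category L] {S : Type*}
    [Category S] (F : Z ⥤ L) (U : L ⥤ S) {w z : Z} (f : w ⟶ z)
    (h1 : IsCartesianHom U (F.map f)) (h2 : IsCartesianHom F f) :
    IsCartesianHom (F ⋙ U) f := by
  intro w'' g u hu
  obtain ⟨v, ⟨hv1, hv2⟩, hvu⟩ := h1 (F.map g) u (by simpa using hu)
  obtain ⟨h, ⟨hh1, hh2⟩, hhu⟩ := h2 g v hv2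
  refine ⟨h, ⟨by simp [Functor.comp_map, hh1, hv1], hh2⟩, ?_⟩
  rintro h' ⟨h'1, h'2⟩
  have hv : F.map h' = v := hvu (F.map h') ⟨h'1, by rw [← F.map_comp, h'2]⟩
  exact hhu h' ⟨hv, h'2⟩

lemma sub_cart {Z : Type*} [Category Z] {S : Type*} [Category S] {P : ObjectProperty Z}
    (G : Z ⥤ S) {X Y : P.FullSubcategory} (f : X ⟶ Y) (h : IsCartesianHom G f.hom) :
    IsCartesianHom (P.ι ⋙ G) f := by
  intro c'' g u hu
  obtain ⟨k, ⟨hk1, hk2⟩, hku⟩ := h g.hom u (by simpa using hu)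
  refine ⟨ObjectProperty.homMk k, ⟨by simpa using hk1, by ext; simpa using hk2⟩, ?_⟩
  rintro h' ⟨h'1, h'2⟩
  ext
  exact hku h'.hom ⟨by simpa using h'1, by rw [← h'2]; rfl⟩

/-- For a groupoid fibration `F : Z ⥤ L` over a fibered category `U : L ⥤ S`
satisfying (B2), the restriction of `U ∘ F` to the full subcategory of minimal
objects of `Z` is a groupoid fibration over `S`. -/
theorem minimal_subcategory_groupoidFibration {Z : Type*} [Category Z]
    {L : Type*} [Category L] {S : Type*} [Category S] (F : Z ⥤ L) (U : L ⥤ S)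
    (hF : IsGroupoidFibration F) (hU : IsFiberedCat U) (hB2 : CondB2 F U) :
    IsGroupoidFibration
      (ObjectProperty.ι (fun z : Z => IsMinimal (F ⋙ U) z) ⋙ F ⋙ U) := by
  constructor
  · rintro ⟨c, hc⟩ d φ
    obtain ⟨l, m, e, hm, hme⟩ := hU (F.obj c) d φ
    subst e
    obtain ⟨w, f, e', hf, hFf⟩ := hF.1 c l m
    subst e'
    simp only [eqToHom_refl, Category.id_comp] at hFf hme
    rw [← hFf] at hm
    have hw : IsMinimal (F ⋙ U) w := (hB2 f hc).mp hm
    refine ⟨⟨w, hw⟩, ObjectProperty.homMk f, rfl, ?_, ?_⟩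
    · intro c'' g u hu
      exact sub_cart (F ⋙ U) _ (comp_cartesian F U f hm (hF.2 f)) g u hu
    · simp only [eqToHom_refl, Category.id_comp]
      show U.map (F.map f) = φ
      rw [hFf, hme]
  · rintro ⟨w, hw⟩ ⟨z, hz⟩ f
    have hm : IsCartesianHom U (F.map f.hom) := (hB2 f.hom hz).mpr hw
    intro c'' g u hu
    exact sub_cart (F ⋙ U) f (comp_cartesian F U f.hom hm (hF.2 f.hom)) g u hu
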